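/- arXiv:1906.00827 — 2 statements merged into one kernel-verified Lean document; each statement's English description precedes it below -/
import Mathlib

section
/- Flandoli–Gatarek compactness theorem (Hölder version): let X₁ ⊂ X₀ ⊂ X₂ be Banach spaces with the inclusion X₁ ↪ X₀ compact and the inclusion X₀ ↪ X₂ continuous, and let 0 < α ≤ 1 and T > 0. Then every sequence (f_n) of continuous functions f_n : [0,T] → X₁ that is bounded in the sup norm of C([0,T];X₁) and uniformly α-Hölder continuous as maps into X₂ (i.e. sup_n sup_{t ≠ s} ‖f_n(t) − f_n(s)‖_{X₂}/|t−s|^α < ∞) has a subsequence converging uniformly on [0,T] in the norm of X₀. -/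
open MeasureTheory ENNReal Filter

noncomputable section

lemma unif_inj {E F : Type*} [MetricSpace E] [MetricSpace F] {K : Set E}
    (hK : IsCompact K) {g : E → F} (hg : Continuous g) (hinj : Function.Injective g) :
    ∀ ε > 0, ∃ δ > 0, ∀ x ∈ K, ∀ y ∈ K, dist (g x) (g y) < δ → dist x y < ε := by
  by_contra h
  push_neg at h
  obtain ⟨ε, hε, h⟩ := h
  choose x hx y hy hgd hd using fun n : ℕ => h (1 / (n + 1)) (by positivity)
  obtain ⟨a, ha, φ, hφ, hxa⟩ := hK.tendsto_subseq hx
  obtain ⟨b, hb, ψ, hψ, hyb⟩ := hK.tendsto_subseq (fun n => hy (φ n))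
  have hxa' : Tendsto (fun n => x (φ (ψ n))) atTop (nhds a) := hxa.comp hψ.tendsto_atTop
  have hgab : g a = g b := by
    have h1 : Tendsto (fun n => dist (g (x (φ (ψ n)))) (g (y (φ (ψ n))))) atTop (nhds 0) := by
      refine squeeze_zero (fun n => dist_nonneg) (fun n => (hgd _).le) ?_
      have : Tendsto (fun n : ℕ => 1 / ((n : ℝ) + 1)) atTop (nhds 0) :=
        tendsto_one_div_add_atTop_nhds_zero_nat
      exact this.comp ((hφ.comp hψ).tendsto_atTop.comp tendsto_id) |>.congr (fun n => rfl)
    have h2 : Tendsto (fun n => dist (g (x (φ (ψ n)))) (g (y (φ (ψ n))))) atTop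
        (nhds (dist (g a) (g b))) :=
      ((hg.continuousAt.tendsto.comp hxa').dist ((hg.continuousAt.tendsto.comp hyb)))
    exact dist_eq_zero.mp (tendsto_nhds_unique h2 h1)
  have hab : a = b := hinj hgab
  have h2 : Tendsto (fun n => dist (x (φ (ψ n))) (y (φ (ψ n)))) atTop (nhds (dist a b)) :=
    hxa'.dist hyb
  have : ε ≤ dist a b := le_of_tendsto_of_tendsto' tendsto_const_nhds h2 (fun n => hd _)
  rw [hab, dist_self] at this
  linarith


/-- **Flandoli–Gatarek compactness theorem (Hölder version).**
The Banach spaces `X₁ ⊂ X₀ ⊂ X₂` are modelled by injective continuous linear maps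
`j₁ : X₁ → X₀` and `j₀ : X₀ → X₂`, with the embedding `X₁ ↪ X₀` compact. A sequence of
continuous functions `[0,T] → X₁`, bounded in `C([0,T];X₁)` and uniformly `α`-Hölder as
maps into `X₂`, has a subsequence converging uniformly on `[0,T]` in the norm of `X₀`. -/
theorem statement5
    {X₁ X₀ X₂ : Type*}
    [NormedAddCommGroup X₁] [NormedSpace ℝ X₁] [CompleteSpace X₁]
    [NormedAddCommGroup X₀] [NormedSpace ℝ X₀] [CompleteSpace X₀]
    [NormedAddCommGroup X₂] [NormedSpace ℝ X₂] [CompleteSpace X₂]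
    (j₁ : X₁ →L[ℝ] X₀) (j₀ : X₀ →L[ℝ] X₂)
    (hj₁ : Function.Injective j₁) (hj₀ : Function.Injective j₀)
    (hcpt : IsCompactOperator (⇑j₁))
    (α T : ℝ) (hα0 : 0 < α) (hα1 : α ≤ 1) (hT : 0 < T)
    (f : ℕ → ℝ → X₁)
    (hcont : ∀ n, ContinuousOn (f n) (Set.Icc 0 T))
    (M : ℝ)
    (hbdd : ∀ n, ∀ t ∈ Set.Icc (0 : ℝ) T, ‖f n t‖ ≤ M)
    (hHolder : ∀ n, ∀ t ∈ Set.Icc (0 : ℝ) T, ∀ s ∈ Set.Icc (0 : ℝ) T,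
      ‖j₀ (j₁ (f n t)) - j₀ (j₁ (f n s))‖ ≤ M * |t - s| ^ α) :
    ∃ φ : ℕ → ℕ, StrictMono φ ∧ ∃ g : ℝ → X₀,
      TendstoUniformlyOn (fun k t => j₁ (f (φ k) t)) g Filter.atTop (Set.Icc 0 T) := by
  have h0T : (0 : ℝ) ∈ Set.Icc (0 : ℝ) T := ⟨le_refl 0, hT.le⟩
  have hM : 0 ≤ M := le_trans (norm_nonneg _) (hbdd 0 0 h0T)
  -- the compact set in X₀
  obtain ⟨K, hKcpt, hKsub⟩ :=
    IsCompactOperator.image_closedBall_subset_compact (𝕜₁ := ℝ)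
      (f := (j₁ : X₁ →ₗ[ℝ] X₀)) hcpt M
  have hmem : ∀ n, ∀ t ∈ Set.Icc (0 : ℝ) T, j₁ (f n t) ∈ K := fun n t ht =>
    hKsub ⟨f n t, mem_closedBall_zero_iff.mpr (hbdd n t ht), rfl⟩
  -- the family of bounded continuous functions
  set I := Set.Icc (0 : ℝ) T with hI
  haveI : CompactSpace I := isCompact_iff_compactSpace.mp isCompact_Icc
  let F : ℕ → BoundedContinuousFunction I X₀ := fun n =>
    BoundedContinuousFunction.mkOfCompact
      ⟨fun t => j₁ (f n t), (j₁.continuous.comp_continuousOn (hcont n)).restrict⟩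
  have hFval : ∀ n (x : I), F n x = j₁ (f n x) := fun n x => rfl
  -- equicontinuity
  have hequi : Equicontinuous (fun n => ⇑(F n)) := by
    intro x
    rw [Metric.equicontinuousAt_iff]
    intro ε hε
    obtain ⟨δ₂, hδ₂, hδ⟩ := unif_inj hKcpt j₀.continuous hj₀ ε hε
    refine ⟨(δ₂ / (M + 1)) ^ α⁻¹, Real.rpow_pos_of_pos (by positivity) _, fun y hy n => ?_⟩
    have hxy : |(y : ℝ) - (x : ℝ)| < (δ₂ / (M + 1)) ^ α⁻¹ := by
      simpa [Subtype.dist_eq, Real.dist_eq] using hy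
    have h1 : |(y : ℝ) - (x : ℝ)| ^ α < δ₂ / (M + 1) := by
      calc |(y : ℝ) - (x : ℝ)| ^ α < ((δ₂ / (M + 1)) ^ α⁻¹) ^ α :=
            Real.rpow_lt_rpow (abs_nonneg _) hxy hα0
        _ = δ₂ / (M + 1) := Real.rpow_inv_rpow (by positivity) hα0.ne'
    have h2 : ‖j₀ (F n x) - j₀ (F n y)‖ < δ₂ := by
      calc ‖j₀ (F n x) - j₀ (F n y)‖ ≤ M * |(x : ℝ) - (y : ℝ)| ^ α :=
            hHolder n x x.2 y y.2
        _ = M * |(y : ℝ) - (x : ℝ)| ^ α := by rw [abs_sub_comm]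
        _ ≤ M * (δ₂ / (M + 1)) := by
            refine mul_le_mul_of_nonneg_left h1.le hM
        _ < δ₂ := by
            rw [div_eq_mul_inv, ← mul_assoc]
            have : M * δ₂ * (M + 1)⁻¹ < δ₂ * (M + 1) * (M + 1)⁻¹ := by
              apply mul_lt_mul_of_pos_right _ (by positivity)
              nlinarith
            calc M * δ₂ * (M + 1)⁻¹ < δ₂ * (M + 1) * (M + 1)⁻¹ := this
              _ = δ₂ := by field_simp
    have := hδ (F n x) (hmem n x x.2) (F n y) (hmem n y y.2) (by
      simpa [dist_eq_norm] using h2)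
    simpa [dist_eq_norm] using this
  -- Arzelà–Ascoli
  have hequi' : Equicontinuous ((↑) : Set.range F → I → X₀) := by
    intro x
    rw [Metric.equicontinuousAt_iff]
    have h := hequi x
    rw [Metric.equicontinuousAt_iff] at h
    intro ε hε
    obtain ⟨δ, hδ, h⟩ := h ε hε
    refine ⟨δ, hδ, fun y hy g => ?_⟩
    obtain ⟨n, hn⟩ := g.2
    have := h y hy n
    simp only [← hn]
    exact this
  have hAA : IsCompact (closure (Set.range F)) :=
    BoundedContinuousFunction.arzela_ascoli K hKcpt (Set.range F)
      (fun g x hg => by obtain ⟨n, hn⟩ := hg; rw [← hn]; exact hmem n x x.2) hequi'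
  obtain ⟨G, hG, φ, hφ, hconv⟩ :=
    hAA.tendsto_subseq (fun n => subset_closure (Set.mem_range_self n))
  refine ⟨φ, hφ, fun t => if h : t ∈ I then G ⟨t, h⟩ else 0, ?_⟩
  rw [tendstoUniformlyOn_iff_tendstoUniformly_comp_coe]
  have hconv' : TendstoUniformly (fun k => ⇑(F (φ k))) (⇑G) atTop :=
    BoundedContinuousFunction.tendsto_iff_tendstoUniformly.mp hconv
  convert hconv' using 1
  · rfl
  funext x
  simp only [Function.comp_apply]
  rw [dif_pos x.2]

end
end

section
/- Gyöngy–Krylov convergence criterion: let X be a complete separable metric space and let (Y_n)_{n ≥ 1} be a sequence of X-valued random variables on a probability space (Ω, 𝓕, ℙ). For m, n ≥ 1 let μ_{m,n} denote the joint law of (Y_n, Y_m) on X × X, i.e. μ_{m,n}(E) = ℙ((Y_n, Y_m) ∈ E) for Borel E ⊆ X × X. Then (Y_n) converges in probability (to some X-valued random variable) if and only if for every subsequence (μ_{m_k, n_k})_{k ≥ 1} of the joint laws there exists a further subsequence converging weakly to a probability measure μ on X × X satisfying μ({(u,v) ∈ X × X : u = v}) = 1. -/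
open MeasureTheory ENNReal Filter Topology

noncomputable section

/-- Auxiliary: convergence in measure implies convergence of integrals of bounded
continuous functions. -/
lemma gk_tendsto_integral_of_tendstoInMeasure {E : Type*} [MetricSpace E] [MeasurableSpace E]
    [BorelSpace E] {Ω : Type*} [MeasurableSpace Ω] (P : Measure Ω) [IsProbabilityMeasure P]
    {W : ℕ → Ω → E} {Z : Ω → E} (hW : ∀ n, Measurable (W n))
    (h : TendstoInMeasure P W atTop Z) (g : BoundedContinuousFunction E ℝ) :
    Tendsto (fun k => ∫ ω, g (W k ω) ∂P) atTop (𝓝 (∫ ω, g (Z ω) ∂P)) := by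
  apply tendsto_of_subseq_tendsto
  intro ns hns
  have h' : TendstoInMeasure P (fun i => W (ns i)) atTop Z := fun ε hε => (h ε hε).comp hns
  obtain ⟨ms, _, hae⟩ := h'.exists_seq_tendsto_ae
  refine ⟨ms, ?_⟩
  apply tendsto_integral_of_dominated_convergence (fun _ => ‖g‖)
  · exact fun n => (g.continuous.measurable.comp (hW _)).aestronglyMeasurable
  · exact integrable_const _
  · exact fun n => Eventually.of_forall fun ω => g.norm_coe_le_norm _
  · exact hae.mono fun ω hω => (g.continuous.tendsto _).comp hω

/-- **Gyöngy–Krylov convergence criterion.**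
A sequence of random variables with values in a Polish space `X` converges in probability
if and only if every subsequence of the joint laws `μ_{m,n} = law (Yₙ, Yₘ)` has a further
subsequence converging weakly to a probability measure concentrated on the diagonal. -/
theorem statement16 {X : Type*} [MetricSpace X] [CompleteSpace X]
    [TopologicalSpace.SeparableSpace X] [MeasurableSpace X] [BorelSpace X]
    {Ω : Type*} [MeasurableSpace Ω] (P : Measure Ω) [IsProbabilityMeasure P]
    (Y : ℕ → Ω → X) (hY : ∀ n, Measurable (Y n)) :
    (∃ Z : Ω → X, Measurable Z ∧ ∀ ε : ℝ, 0 < ε →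
        Filter.Tendsto (fun n => P {ω | ε < dist (Y n ω) (Z ω)}) Filter.atTop (nhds 0)) ↔
    (∀ nk mk : ℕ → ℕ, StrictMono nk → StrictMono mk →
      ∃ φ : ℕ → ℕ, StrictMono φ ∧ ∃ μ : Measure (X × X),
        IsProbabilityMeasure μ ∧
        (∀ g : BoundedContinuousFunction (X × X) ℝ,
          Filter.Tendsto
            (fun k => ∫ q, g q ∂(P.map (fun ω => (Y (nk (φ k)) ω, Y (mk (φ k)) ω))))
            Filter.atTop (nhds (∫ q, g q ∂μ))) ∧
        μ {q : X × X | q.1 = q.2} = 1) := by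
  constructor
  · -- Forward direction
    rintro ⟨Z, hZmeas, hZ⟩ nk mk hnk hmk
    -- convergence in probability with `≤` sets
    have hZ' : TendstoInMeasure P Y atTop Z := by
      rw [tendstoInMeasure_iff_dist]
      intro ε hε
      have hsub : ∀ n, {ω | ε ≤ dist (Y n ω) (Z ω)} ⊆ {ω | ε / 2 < dist (Y n ω) (Z ω)} :=
        fun n ω hω => lt_of_lt_of_le (half_lt_self hε) hω
      exact tendsto_of_tendsto_of_tendsto_of_le_of_le tendsto_const_nhds
        (hZ (ε / 2) (by linarith)) (fun n => by positivity)
        (fun n => measure_mono (hsub n))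
    have hpair : ∀ k, Measurable (fun ω => (Y (nk k) ω, Y (mk k) ω)) :=
      fun k => (hY _).prodMk (hY _)
    have hZpair : Measurable (fun ω => (Z ω, Z ω)) := hZmeas.prodMk hZmeas
    refine ⟨id, strictMono_id, P.map (fun ω => (Z ω, Z ω)),
      Measure.isProbabilityMeasure_map hZpair.aemeasurable, ?_, ?_⟩
    · intro g
      have htim : TendstoInMeasure P (fun k ω => (Y (nk k) ω, Y (mk k) ω)) atTop
          (fun ω => (Z ω, Z ω)) := by
        rw [tendstoInMeasure_iff_dist]
        intro ε hε
        have hsub : ∀ k, {ω | ε ≤ dist ((Y (nk k) ω, Y (mk k) ω)) ((Z ω, Z ω))} ⊆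
            {ω | ε ≤ dist (Y (nk k) ω) (Z ω)} ∪ {ω | ε ≤ dist (Y (mk k) ω) (Z ω)} := by
          intro k ω hω
          simp only [Set.mem_setOf_eq, Prod.dist_eq, le_max_iff] at hω
          exact hω.imp (fun h => h) (fun h => h)
        have hadd : Tendsto (fun k => P {ω | ε ≤ dist (Y (nk k) ω) (Z ω)} +
            P {ω | ε ≤ dist (Y (mk k) ω) (Z ω)}) atTop (𝓝 0) := by
          simpa using Tendsto.add ((tendstoInMeasure_iff_dist.mp hZ' ε hε).comp hnk.tendsto_atTop)
            ((tendstoInMeasure_iff_dist.mp hZ' ε hε).comp hmk.tendsto_atTop)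
        exact tendsto_of_tendsto_of_tendsto_of_le_of_le tendsto_const_nhds hadd
          (fun k => by positivity)
          (fun k => (measure_mono (hsub k)).trans (measure_union_le _ _))
      have key := gk_tendsto_integral_of_tendstoInMeasure P hpair htim g
      have heq : ∀ k, ∫ q, g q ∂(P.map (fun ω => (Y (nk k) ω, Y (mk k) ω)))
          = ∫ ω, g ((Y (nk k) ω, Y (mk k) ω)) ∂P :=
        fun k => integral_map (hpair k).aemeasurable g.continuous.aestronglyMeasurable
      have heq2 : ∫ q, g q ∂(P.map (fun ω => (Z ω, Z ω))) = ∫ ω, g ((Z ω, Z ω)) ∂P :=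
        integral_map hZpair.aemeasurable g.continuous.aestronglyMeasurable
      simp only [id, heq, heq2]
      exact key
    · rw [Measure.map_apply hZpair (isClosed_eq continuous_fst continuous_snd).measurableSet]
      simp
  · -- Backward direction
    intro H
    -- Step 1: the sequence is Cauchy in probability.
    have hCauchy : ∀ ε : ℝ, 0 < ε → ∀ δ : ℝ≥0∞, 0 < δ →
        ∃ N, ∀ n, N ≤ n → ∀ m, N ≤ m → P {ω | ε ≤ dist (Y n ω) (Y m ω)} ≤ δ := by
      by_contra hcon
      push_neg at hcon
      obtain ⟨ε, hε, δ, hδ, hcon⟩ := hcon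
      have hex : ∀ N : ℕ, ∃ p : ℕ × ℕ, N ≤ p.1 ∧ N ≤ p.2 ∧
          δ < P {ω | ε ≤ dist (Y p.1 ω) (Y p.2 ω)} := by
        intro N
        obtain ⟨n, hn, m, hm, h⟩ := hcon N
        exact ⟨(n, m), hn, hm, h⟩
      let F : ℕ → ℕ × ℕ := fun k =>
        Nat.rec (hex 0).choose (fun _ prev => (hex (max prev.1 prev.2 + 1)).choose) k
      have hF : ∀ k, δ < P {ω | ε ≤ dist (Y (F k).1 ω) (Y (F k).2 ω)} := by
        intro k
        cases k with
        | zero => exact (hex 0).choose_spec.2.2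
        | succ k => exact (hex _).choose_spec.2.2
      have hFs : ∀ k, max (F k).1 (F k).2 + 1 ≤ min (F (k + 1)).1 (F (k + 1)).2 := by
        intro k
        exact le_min (hex (max (F k).1 (F k).2 + 1)).choose_spec.1
          (hex (max (F k).1 (F k).2 + 1)).choose_spec.2.1
      set nk : ℕ → ℕ := fun k => (F k).1 with hnk_def
      set mk : ℕ → ℕ := fun k => (F k).2 with hmk_def
      have hnk : StrictMono nk := by
        apply strictMono_nat_of_lt_succ
        intro k
        show (F k).1 < (F (k + 1)).1
        have h1 := (hFs k).trans (min_le_left _ _)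
        have h2 : (F k).1 ≤ max (F k).1 (F k).2 := le_max_left _ _
        omega
      have hmk : StrictMono mk := by
        apply strictMono_nat_of_lt_succ
        intro k
        show (F k).2 < (F (k + 1)).2
        have h1 := (hFs k).trans (min_le_right _ _)
        have h2 : (F k).2 ≤ max (F k).1 (F k).2 := le_max_right _ _
        omega
      obtain ⟨φ, hφ, μ, hμprob, hconv, hdiag⟩ := H nk mk hnk hmk
      have hpairmeas : ∀ k, Measurable (fun ω => (Y (nk (φ k)) ω, Y (mk (φ k)) ω)) :=
        fun k => (hY _).prodMk (hY _)
      haveI : ∀ k, IsProbabilityMeasure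
          (P.map (fun ω => (Y (nk (φ k)) ω, Y (mk (φ k)) ω))) :=
        fun k => Measure.isProbabilityMeasure_map (hpairmeas k).aemeasurable
      let μs : ℕ → ProbabilityMeasure (X × X) :=
        fun k => ⟨P.map (fun ω => (Y (nk (φ k)) ω, Y (mk (φ k)) ω)), inferInstance⟩
      haveI := hμprob
      let μP : ProbabilityMeasure (X × X) := ⟨μ, hμprob⟩
      have htend : Tendsto μs atTop (𝓝 μP) := by
        rw [ProbabilityMeasure.tendsto_iff_forall_integral_tendsto]
        intro g
        exact hconv g
      have hFclosed : IsClosed {q : X × X | ε ≤ dist q.1 q.2} :=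
        isClosed_le continuous_const (continuous_fst.dist continuous_snd)
      have hμF : μ {q : X × X | ε ≤ dist q.1 q.2} = 0 := by
        have hsub : {q : X × X | ε ≤ dist q.1 q.2} ⊆ {q : X × X | q.1 = q.2}ᶜ := by
          intro q hq h'
          simp only [Set.mem_setOf_eq] at hq h'
          rw [h'] at hq
          simp at hq
          linarith
        refine measure_mono_null hsub ?_
        rw [measure_compl (isClosed_eq continuous_fst continuous_snd).measurableSet
          (measure_ne_top μ _), hdiag, measure_univ, tsub_self]
      have hlim := ProbabilityMeasure.limsup_measure_closed_le_of_tendsto htend hFclosed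
      have hge : ∀ k, δ ≤ (μs k : Measure (X × X)) {q : X × X | ε ≤ dist q.1 q.2} := by
        intro k
        have h1 : (μs k : Measure (X × X)) {q : X × X | ε ≤ dist q.1 q.2}
            = P {ω | ε ≤ dist (Y (nk (φ k)) ω) (Y (mk (φ k)) ω)} := by
          show (P.map (fun ω => (Y (nk (φ k)) ω, Y (mk (φ k)) ω)))
              {q : X × X | ε ≤ dist q.1 q.2} = _
          rw [Measure.map_apply (hpairmeas k) hFclosed.measurableSet]
          rfl
        rw [h1]
        exact (hF (φ k)).le
      have hle : δ ≤ atTop.limsup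
          (fun k => (μs k : Measure (X × X)) {q : X × X | ε ≤ dist q.1 q.2}) :=
        le_limsup_of_frequently_le (Frequently.of_forall hge)
      exact hδ.not_ge (hle.trans (hlim.trans_eq hμF))
    -- Step 2: extract an a.e. convergent subsequence.
    have hpow_pos : ∀ k : ℕ, (0 : ℝ≥0∞) < 2⁻¹ ^ k :=
      fun k => ENNReal.pow_pos (ENNReal.inv_pos.mpr ENNReal.ofNat_ne_top) k
    have hN : ∀ k : ℕ, ∃ N, ∀ n, N ≤ n → ∀ m, N ≤ m →
        P {ω | (2 : ℝ)⁻¹ ^ k ≤ dist (Y n ω) (Y m ω)} ≤ (2 : ℝ≥0∞)⁻¹ ^ k :=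
      fun k => hCauchy _ (by positivity) _ (hpow_pos k)
    let N : ℕ → ℕ := fun k => (hN k).choose
    let u : ℕ → ℕ := fun k => Nat.rec (N 0) (fun k prev => max (N (k + 1)) (prev + 1)) k
    have hu_mono : StrictMono u := strictMono_nat_of_lt_succ fun k =>
      lt_of_lt_of_le (Nat.lt_succ_self _) (le_max_right _ _)
    have hu_ge : ∀ k, N k ≤ u k := by
      intro k
      cases k with
      | zero => exact le_rfl
      | succ k => exact le_max_left _ _
    have hP_consec : ∀ k, P {ω | (2 : ℝ)⁻¹ ^ k ≤ dist (Y (u (k + 1)) ω) (Y (u k) ω)}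
        ≤ (2 : ℝ≥0∞)⁻¹ ^ k := by
      intro k
      exact (hN k).choose_spec (u (k + 1)) ((hu_ge k).trans (hu_mono.monotone (Nat.le_succ k)))
        (u k) (hu_ge k)
    have hsum : ∑' k, P {ω | (2 : ℝ)⁻¹ ^ k ≤ dist (Y (u (k + 1)) ω) (Y (u k) ω)} ≠ ∞ := by
      apply ne_top_of_le_ne_top _ (ENNReal.tsum_le_tsum hP_consec)
      simpa only [ENNReal.tsum_geometric, ENNReal.one_sub_inv_two, inv_inv]
        using ENNReal.ofNat_ne_top
    have hae_cauchy : ∀ᵐ ω ∂P, ∃ l, Tendsto (fun k => Y (u k) ω) atTop (𝓝 l) := by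
      filter_upwards [ae_finite_setOf_mem hsum] with ω hω
      obtain ⟨b, hb⟩ := hω.bddAbove
      have hK : ∀ k, b + 1 ≤ k → dist (Y (u (k + 1)) ω) (Y (u k) ω) < (2 : ℝ)⁻¹ ^ k := by
        intro k hk
        by_contra hcon
        push_neg at hcon
        have : k ≤ b := hb hcon
        omega
      have hshift : CauchySeq (fun j => Y (u (j + (b + 1))) ω) := by
        apply cauchySeq_of_dist_le_of_summable (fun j => (2 : ℝ)⁻¹ ^ (j + (b + 1)))
        · intro j
          have := (hK (j + (b + 1)) (le_add_self)).le
          rw [dist_comm] at this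
          calc dist (Y (u (j + (b + 1))) ω) (Y (u (j + 1 + (b + 1))) ω)
              = dist (Y (u (j + (b + 1))) ω) (Y (u ((j + (b + 1)) + 1)) ω) := by ring_nf
            _ ≤ (2 : ℝ)⁻¹ ^ (j + (b + 1)) := this
        · have hs : Summable fun j : ℕ => (2 : ℝ)⁻¹ ^ j :=
            summable_geometric_of_lt_one (by norm_num) (by norm_num)
          simpa [pow_add] using hs.mul_right ((2 : ℝ)⁻¹ ^ (b + 1))
      exact cauchySeq_tendsto_of_complete ((cauchySeq_shift (b + 1)).mp hshift)
    obtain ⟨Z, hZmeas, hZae⟩ := measurable_limit_of_tendsto_metrizable_ae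
      (fun k => (hY (u k)).aemeasurable) hae_cauchy
    refine ⟨Z, hZmeas, ?_⟩
    intro ε hε
    rw [ENNReal.tendsto_atTop_zero]
    intro δ hδ
    have hsubZ : TendstoInMeasure P (fun k => Y (u k)) atTop Z :=
      tendstoInMeasure_of_tendsto_ae (fun k => (hY (u k)).aestronglyMeasurable) hZae
    obtain ⟨K₁, hK₁⟩ := ENNReal.tendsto_atTop_zero.mp (tendstoInMeasure_iff_dist.mp hsubZ (ε / 2) (by linarith)) (δ / 2)
      (ENNReal.half_pos hδ.ne')
    obtain ⟨Nc, hNc⟩ := hCauchy (ε / 2) (by linarith) (δ / 2) (ENNReal.half_pos hδ.ne')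
    set k0 := max K₁ Nc with hk0_def
    have hk0 : Nc ≤ u k0 := le_trans (le_max_right _ _) hu_mono.le_apply
    refine ⟨Nc, fun n hn => ?_⟩
    have hsubset : {ω | ε < dist (Y n ω) (Z ω)} ⊆
        {ω | ε / 2 ≤ dist (Y n ω) (Y (u k0) ω)} ∪ {ω | ε / 2 ≤ dist (Y (u k0) ω) (Z ω)} := by
      intro ω hω
      simp only [Set.mem_setOf_eq] at hω
      by_contra hcontra
      simp only [Set.mem_union, Set.mem_setOf_eq, not_or, not_le] at hcontra
      have := dist_triangle (Y n ω) (Y (u k0) ω) (Z ω)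
      linarith [hcontra.1, hcontra.2]
    calc P {ω | ε < dist (Y n ω) (Z ω)}
        ≤ P {ω | ε / 2 ≤ dist (Y n ω) (Y (u k0) ω)}
          + P {ω | ε / 2 ≤ dist (Y (u k0) ω) (Z ω)} :=
          (measure_mono hsubset).trans (measure_union_le _ _)
      _ ≤ δ / 2 + δ / 2 := add_le_add (hNc n hn (u k0) hk0) (hK₁ k0 (le_max_left _ _))
      _ = δ := ENNReal.add_halves δ

end
end
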